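/- Let Q be a bounded, positive, self-adjoint operator on a complex Hilbert space H, let γ > 0 and let T be a positive even integer with γ‖Q‖ ≤ 1, and set λ := (γT)^{−1}. Then ‖(Q + λ I) Ḡ_T(Q)‖ ≤ 3; moreover ‖Q Ḡ_T(Q)‖ ≤ 1 and ‖Ḡ_T(Q)‖ ≤ γT. -/

import Mathlib

set_option maxHeartbeats 1000000

/-- Fractional power `A^r` (for `r : ℝ`) of a bounded operator, via the continuous
functional calculus for self-adjoint operators (real power `x ↦ x ^ r`). -/
noncomputable def opPow {H : Type*} [NormedAddCommGroup H] [InnerProductSpace ℂ H]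
    [CompleteSpace H] (A : H →L[ℂ] H) (r : ℝ) : H →L[ℂ] H :=
  cfc (fun x : ℝ => x ^ r) A

/-- The tail-averaged gradient-descent filter operator
`Ḡ_T(Q) = (2/T) ∑_{t=T/2+1}^{T} γ ∑_{k=0}^{t-1} (I - γQ)^k`. -/
noncomputable def Gbar {H : Type*} [NormedAddCommGroup H] [InnerProductSpace ℂ H]
    [CompleteSpace H] (γ : ℝ) (T : ℕ) (Q : H →L[ℂ] H) : H →L[ℂ] H :=
  (2 / (T : ℂ)) • ∑ t ∈ Finset.Ioc (T / 2) T,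
    (γ : ℂ) • ∑ k ∈ Finset.range t, (1 - (γ : ℂ) • Q) ^ k

/-- The tail-averaged gradient-descent residual operator
`R̄_T(Q) = (2/T) ∑_{t=T/2+1}^{T} (I - γQ)^t`. -/
noncomputable def Rbar {H : Type*} [NormedAddCommGroup H] [InnerProductSpace ℂ H]
    [CompleteSpace H] (γ : ℝ) (T : ℕ) (Q : H →L[ℂ] H) : H →L[ℂ] H :=
  (2 / (T : ℂ)) • ∑ t ∈ Finset.Ioc (T / 2) T, (1 - (γ : ℂ) • Q) ^ t

/-- The scalar filter function corresponding to `Gbar`. -/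
noncomputable def gbarFun (γ : ℝ) (T : ℕ) (x : ℝ) : ℝ :=
  (2 / (T : ℝ)) * ∑ t ∈ Finset.Ioc (T / 2) T, γ * ∑ k ∈ Finset.range t, (1 - γ * x) ^ k

/-- `Gbar γ T Q` is the continuous functional calculus of `gbarFun γ T` applied to `Q`. -/
lemma Gbar_eq_cfc {H : Type*} [NormedAddCommGroup H] [InnerProductSpace ℂ H]
    [CompleteSpace H] (Q : H →L[ℂ] H) (hQ : IsSelfAdjoint Q) (γ : ℝ) (T : ℕ) :
    Gbar γ T Q = cfc (gbarFun γ T) Q := by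
  have hA : cfc (fun x : ℝ => 1 - γ * x) Q = 1 - (γ : ℂ) • Q := by
    rw [cfc_sub (fun _ => (1:ℝ)) (fun x => γ * x) Q (by fun_prop) (by fun_prop),
      cfc_const_one ℝ Q hQ, cfc_const_mul_id γ Q hQ, Complex.coe_smul]
  have h1 : ∀ k : ℕ, cfc (fun x : ℝ => (1 - γ * x) ^ k) Q = (1 - (γ:ℂ) • Q) ^ k := fun k => by
    rw [cfc_pow (fun x : ℝ => 1 - γ * x) k Q (by fun_prop) hQ, hA]
  have h2 : ∀ t : ℕ, cfc (fun x : ℝ => γ * ∑ k ∈ Finset.range t, (1 - γ * x) ^ k) Q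
      = (γ:ℂ) • ∑ k ∈ Finset.range t, (1 - (γ:ℂ) • Q) ^ k := by
    intro t
    rw [cfc_const_mul γ _ Q (by fun_prop), Complex.coe_smul]
    congr 1
    rw [show (fun x : ℝ => ∑ k ∈ Finset.range t, (1 - γ * x) ^ k)
        = ∑ k ∈ Finset.range t, (fun x : ℝ => (1 - γ * x) ^ k) by rw [Finset.sum_fn],
      cfc_sum _ Q _ (fun k _ => by fun_prop)]
    exact Finset.sum_congr rfl fun k _ => h1 k
  show _ = cfc (fun x : ℝ =>
      (2 / (T : ℝ)) * ∑ t ∈ Finset.Ioc (T / 2) T, γ * ∑ k ∈ Finset.range t, (1 - γ * x) ^ k) Q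
  rw [cfc_const_mul _ _ Q (by fun_prop),
    show (fun x : ℝ => ∑ t ∈ Finset.Ioc (T/2) T, γ * ∑ k ∈ Finset.range t, (1 - γ * x) ^ k)
        = ∑ t ∈ Finset.Ioc (T/2) T, (fun x : ℝ => γ * ∑ k ∈ Finset.range t, (1 - γ * x) ^ k)
      by rw [Finset.sum_fn],
    cfc_sum _ Q _ (fun t _ => by fun_prop)]
  rw [Gbar, show ((2 : ℂ) / (T:ℂ)) = (((2 / (T:ℝ) : ℝ)) : ℂ) by push_cast; ring,
    Complex.coe_smul]
  congr 1
  exact Finset.sum_congr rfl fun t _ => (h2 t).symm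

/-- Scalar bound: `0 ≤ gbarFun γ T x ≤ γ T` when `0 ≤ x` and `γ x ≤ 1`. -/
lemma gbarFun_bound (γ : ℝ) (T : ℕ) (hγ : 0 < γ) (hT : 0 < T) (hTeven : Even T)
    (x : ℝ) (hx0 : 0 ≤ x) (hx1 : γ * x ≤ 1) :
    0 ≤ gbarFun γ T x ∧ gbarFun γ T x ≤ γ * T := by
  have ha0 : (0:ℝ) ≤ 1 - γ * x := by linarith
  have ha1 : 1 - γ * x ≤ 1 := by nlinarith
  have hm : (T / 2) * 2 = T := Nat.div_mul_cancel hTeven.two_dvd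
  have hTR : (0:ℝ) < (T:ℝ) := by exact_mod_cast hT
  have hcard : (Finset.Ioc (T/2) T).card = T / 2 := by
    rw [Nat.card_Ioc]; omega
  have hS0 : ∀ t : ℕ, 0 ≤ ∑ k ∈ Finset.range t, (1 - γ * x) ^ k := fun t =>
    Finset.sum_nonneg fun k _ => pow_nonneg ha0 k
  have hS1 : ∀ t : ℕ, ∑ k ∈ Finset.range t, (1 - γ * x) ^ k ≤ t := fun t => by
    calc ∑ k ∈ Finset.range t, (1 - γ * x) ^ k ≤ ∑ k ∈ Finset.range t, 1 :=
          Finset.sum_le_sum fun k _ => pow_le_one₀ ha0 ha1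
      _ = t := by simp
  constructor
  · apply mul_nonneg (by positivity)
    exact Finset.sum_nonneg fun t _ => mul_nonneg hγ.le (hS0 t)
  · have hsum : ∑ t ∈ Finset.Ioc (T/2) T, γ * ∑ k ∈ Finset.range t, (1 - γ * x) ^ k
        ≤ ∑ t ∈ Finset.Ioc (T/2) T, γ * T := by
      refine Finset.sum_le_sum fun t ht => ?_
      have htT : t ≤ T := (Finset.mem_Ioc.mp ht).2
      have : (∑ k ∈ Finset.range t, (1 - γ * x) ^ k) ≤ (t:ℝ) := hS1 t
      have htT' : (t:ℝ) ≤ T := by exact_mod_cast htT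
      nlinarith
    rw [gbarFun]
    calc (2 / (T:ℝ)) * ∑ t ∈ Finset.Ioc (T/2) T, γ * ∑ k ∈ Finset.range t, (1 - γ * x) ^ k
        ≤ (2 / (T:ℝ)) * ∑ t ∈ Finset.Ioc (T/2) T, γ * T := by
          apply mul_le_mul_of_nonneg_left hsum (by positivity)
      _ = (2 / (T:ℝ)) * ((T/2 : ℕ) * (γ * T)) := by
          rw [Finset.sum_const, hcard, nsmul_eq_mul]
      _ = γ * T := by
          have h2 : ((T/2 : ℕ) : ℝ) = (T:ℝ)/2 := by
            have : ((T/2 : ℕ) : ℝ) * 2 = (T:ℝ) := by exact_mod_cast hm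
            linarith
          rw [h2]; field_simp
  
/-- Scalar bound: `0 ≤ x * gbarFun γ T x ≤ 1` when `0 ≤ x` and `γ x ≤ 1`. -/
lemma mul_gbarFun_bound (γ : ℝ) (T : ℕ) (hγ : 0 < γ) (hT : 0 < T) (hTeven : Even T)
    (x : ℝ) (hx0 : 0 ≤ x) (hx1 : γ * x ≤ 1) :
    0 ≤ x * gbarFun γ T x ∧ x * gbarFun γ T x ≤ 1 := by
  have ha0 : (0:ℝ) ≤ 1 - γ * x := by linarith
  have ha1 : 1 - γ * x ≤ 1 := by nlinarith
  have hm : (T / 2) * 2 = T := Nat.div_mul_cancel hTeven.two_dvd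
  have hTR : (0:ℝ) < (T:ℝ) := by exact_mod_cast hT
  have hcard : (Finset.Ioc (T/2) T).card = T / 2 := by rw [Nat.card_Ioc]; omega
  have key : x * gbarFun γ T x
      = (2 / (T:ℝ)) * ∑ t ∈ Finset.Ioc (T/2) T, (1 - (1 - γ * x) ^ t) := by
    rw [gbarFun, mul_left_comm, Finset.mul_sum]
    congr 1
    refine Finset.sum_congr rfl fun t _ => ?_
    linear_combination (-1 : ℝ) * geom_sum_mul (1 - γ*x) t
  have hterm : ∀ t : ℕ, 0 ≤ 1 - (1 - γ * x) ^ t ∧ 1 - (1 - γ * x) ^ t ≤ 1 := fun t =>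
    ⟨by have := pow_le_one₀ ha0 ha1 (n := t); linarith,
     by have := pow_nonneg ha0 t; linarith⟩
  rw [key]
  constructor
  · exact mul_nonneg (by positivity) (Finset.sum_nonneg fun t _ => (hterm t).1)
  · calc (2 / (T:ℝ)) * ∑ t ∈ Finset.Ioc (T/2) T, (1 - (1 - γ * x) ^ t)
        ≤ (2 / (T:ℝ)) * ∑ t ∈ Finset.Ioc (T/2) T, 1 :=
          mul_le_mul_of_nonneg_left (Finset.sum_le_sum fun t _ => (hterm t).2) (by positivity)
      _ = (2 / (T:ℝ)) * (T/2 : ℕ) := by rw [Finset.sum_const, hcard, nsmul_eq_mul, mul_one]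
      _ = 1 := by
          have h2 : ((T/2 : ℕ) : ℝ) = (T:ℝ)/2 := by
            have : ((T/2 : ℕ) : ℝ) * 2 = (T:ℝ) := by exact_mod_cast hm
            linarith
          rw [h2]; field_simp

/-- filter-operator bound for the tail-averaged GD filter;
Lemma 2 of Mücke–Neu–Rosasco with K = 3.
For a bounded positive self-adjoint operator `Q`, `γ > 0`, a positive even integer
`T` with `γ‖Q‖ ≤ 1`, and `λ = (γT)⁻¹`:
`‖(Q + λI) Ḡ_T(Q)‖ ≤ 3`, `‖Q Ḡ_T(Q)‖ ≤ 1`, and `‖Ḡ_T(Q)‖ ≤ γT`. -/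
theorem filter_operator_bound
    {H : Type*} [NormedAddCommGroup H] [InnerProductSpace ℂ H] [CompleteSpace H]
    (Q : H →L[ℂ] H) (hQ : Q.IsPositive)
    (γ : ℝ) (T : ℕ) (hγ : 0 < γ) (hT : 0 < T) (hTeven : Even T)
    (hγQ : γ * ‖Q‖ ≤ 1) :
    ‖(Q + ((γ * (T : ℝ))⁻¹ : ℝ) • (1 : H →L[ℂ] H)) * Gbar γ T Q‖ ≤ 3 ∧
      ‖Q * Gbar γ T Q‖ ≤ 1 ∧
      ‖Gbar γ T Q‖ ≤ γ * (T : ℝ) := by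
  have hγT : (0:ℝ) < γ * T := by
    have : (0:ℝ) < (T:ℝ) := by exact_mod_cast hT
    positivity
  rcases subsingleton_or_nontrivial H with hH | hH
  · have h0 : ∀ (S : H →L[ℂ] H), S = 0 := fun S => Subsingleton.elim S 0
    rw [h0 ((Q + ((γ * (T : ℝ))⁻¹ : ℝ) • (1 : H →L[ℂ] H)) * Gbar γ T Q),
      h0 (Q * Gbar γ T Q), h0 (Gbar γ T Q), norm_zero]
    norm_num
    positivity
  have hsa : IsSelfAdjoint Q := hQ.isSelfAdjoint
  have hspec : ∀ x ∈ spectrum ℝ Q, 0 ≤ x ∧ γ * x ≤ 1 := by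
    intro x hx
    have h0 := spectrum_nonneg_of_nonneg ((ContinuousLinearMap.nonneg_iff_isPositive Q).mpr hQ) hx
    have h1 : x ≤ ‖Q‖ := (Real.norm_of_nonneg h0) ▸ spectrum.norm_le_norm_of_mem hx
    exact ⟨h0, le_trans (mul_le_mul_of_nonneg_left h1 hγ.le) hγQ⟩
  have hG := Gbar_eq_cfc Q hsa γ T
  have bound3 : ‖Gbar γ T Q‖ ≤ γ * T := by
    rw [hG]
    refine norm_cfc_le hγT.le fun x hx => ?_
    obtain ⟨hx0, hx1⟩ := hspec x hx
    obtain ⟨hg0, hg1⟩ := gbarFun_bound γ T hγ hT hTeven x hx0 hx1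
    rw [Real.norm_of_nonneg hg0]; exact hg1
  have hcont : ContinuousOn (gbarFun γ T) (spectrum ℝ Q) := by unfold gbarFun; fun_prop
  have hQG : Q * Gbar γ T Q = cfc (fun x : ℝ => x * gbarFun γ T x) Q := by
    rw [hG, cfc_mul (fun x : ℝ => x) (gbarFun γ T) Q (by fun_prop) hcont, cfc_id' ℝ Q hsa]
  have bound2 : ‖Q * Gbar γ T Q‖ ≤ 1 := by
    rw [hQG]
    refine norm_cfc_le one_pos.le fun x hx => ?_
    obtain ⟨hx0, hx1⟩ := hspec x hx
    obtain ⟨hg0, hg1⟩ := mul_gbarFun_bound γ T hγ hT hTeven x hx0 hx1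
    rw [Real.norm_of_nonneg hg0]; exact hg1
  refine ⟨?_, bound2, bound3⟩
  have expand : (Q + ((γ * (T : ℝ))⁻¹ : ℝ) • (1 : H →L[ℂ] H)) * Gbar γ T Q
      = Q * Gbar γ T Q + ((γ * (T : ℝ))⁻¹ : ℝ) • Gbar γ T Q := by
    rw [add_mul, smul_mul_assoc, one_mul]
  rw [expand]
  have h2 : ‖((γ * (T : ℝ))⁻¹ : ℝ) • Gbar γ T Q‖ ≤ 1 := by
    rw [norm_smul, Real.norm_of_nonneg (by positivity)]
    calc (γ * (T:ℝ))⁻¹ * ‖Gbar γ T Q‖ ≤ (γ * (T:ℝ))⁻¹ * (γ * T) :=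
          mul_le_mul_of_nonneg_left bound3 (by positivity)
      _ = 1 := inv_mul_cancel₀ hγT.ne'
  calc ‖Q * Gbar γ T Q + ((γ * (T : ℝ))⁻¹ : ℝ) • Gbar γ T Q‖
      ≤ ‖Q * Gbar γ T Q‖ + ‖((γ * (T : ℝ))⁻¹ : ℝ) • Gbar γ T Q‖ := norm_add_le _ _
    _ ≤ 1 + 1 := add_le_add bound2 h2
    _ ≤ 3 := by norm_num
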